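/- arXiv:2202.07638 — 2 statements merged into one kernel-verified Lean document; each statement's English description precedes it below -/
import Mathlib

section
/- Let |·|_{G_1},…,|·|_{G_N} be norms on ℝ^n, let |·|_S be a monotone norm on ℝ^N, and let |·|_G be the associated composite norm on ℝ^{nN}. Let A ∈ ℝ^{nN×nN} be partitioned into blocks A_{ij} ∈ ℝ^{n×n}, i,j = 1,…,N, and define the N×N matrix Â by Â_{ii} = μ_{G_i}(A_{ii}) (the matrix measure of the i-th diagonal block with respect to |·|_{G_i}) and, for i ≠ j, Â_{ij} = ‖A_{ij}‖_{G_{i,j}}, the operator norm of A_{ij} viewed as a linear map from (ℝ^n, |·|_{G_j}) to (ℝ^n, |·|_{G_i}). Then μ_G(A) ≤ μ_S(Â), where μ_G and μ_S are the matrix measures induced by |·|_G and |·|_S respectively. -/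
open Filter Set

/-- `ν` is a norm on the real vector space `E`. -/
def IsNorm {E : Type*} [AddCommGroup E] [Module ℝ E] (ν : E → ℝ) : Prop :=
  (∀ x, 0 ≤ ν x) ∧ (∀ x, ν x = 0 → x = 0) ∧
  (∀ (a : ℝ) (x : E), ν (a • x) = |a| * ν x) ∧
  (∀ x y : E, ν (x + y) ≤ ν x + ν y)

/-- The operator norm of a map `L` with respect to a norm `νE` on the domain and a norm
`νF` on the codomain: the supremum of `νF (L x)` over the unit sphere `νE x = 1`. -/
noncomputable def opNorm {E F : Type*} (νE : E → ℝ) (νF : F → ℝ) (L : E → F) : ℝ :=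
  sSup {c | ∃ x, νE x = 1 ∧ c = νF (L x)}

/-- `μ` is the matrix measure (logarithmic norm) of the linear map `L` with respect to the
norm `ν`, i.e. `μ = lim_{h→0⁺} (‖I + hL‖ − 1)/h` where `‖·‖` is the operator norm
induced by `ν`. -/
def HasMatMeasure {E : Type*} [Add E] [SMul ℝ E] (ν : E → ℝ) (L : E → E) (μ : ℝ) : Prop :=
  Tendsto (fun h : ℝ => (opNorm ν ν (fun x => x + h • L x) - 1) / h)
    (nhdsWithin (0 : ℝ) (Set.Ioi 0)) (nhds μ)

/-- The action on `ℝ^{nN}` (viewed as `Fin N → Fin n → ℝ`) of the block-partitioned matrix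
`A ∈ ℝ^{nN×nN}` with blocks `A i j ∈ ℝ^{n×n}`. -/
noncomputable def blockMulVec {N n : ℕ} (A : Fin N → Fin N → Matrix (Fin n) (Fin n) ℝ)
    (η : Fin N → Fin n → ℝ) : Fin N → Fin n → ℝ :=
  fun i => ∑ j, (A i j).mulVec (η j)

section Aux

variable {E F : Type*} [AddCommGroup E] [Module ℝ E] [AddCommGroup F] [Module ℝ F]

lemma IsNorm.zero' {ν : E → ℝ} (hν : IsNorm ν) : ν 0 = 0 := by
  have := hν.2.2.1 0 0
  simpa using this

lemma IsNorm.sum_le' {ν : E → ℝ} (hν : IsNorm ν)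
    {ι : Type*} (s : Finset ι) (f : ι → E) :
    ν (∑ i ∈ s, f i) ≤ ∑ i ∈ s, ν (f i) := by
  classical
  induction s using Finset.induction with
  | empty => simp [hν.zero']
  | @insert _ _ hi ih =>
      rw [Finset.sum_insert hi, Finset.sum_insert hi]
      exact le_trans (hν.2.2.2 _ _) (by linarith)

lemma IsNorm.exists_one {ν : E → ℝ} (hν : IsNorm ν) [Nontrivial E] : ∃ x, ν x = 1 := by
  obtain ⟨x, hx⟩ := exists_ne (0 : E)
  have ht : 0 < ν x := lt_of_le_of_ne (hν.1 x) fun h => hx (hν.2.1 x h.symm)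
  refine ⟨(ν x)⁻¹ • x, ?_⟩
  rw [hν.2.2.1, abs_inv, abs_of_pos ht, inv_mul_cancel₀ ht.ne']

end Aux

section Norm

variable {E F : Type*} [NormedAddCommGroup E] [NormedSpace ℝ E] [FiniteDimensional ℝ E]
  [NormedAddCommGroup F] [NormedSpace ℝ F] [FiniteDimensional ℝ F]

lemma IsNorm.le_aux {ν : E → ℝ} (hν : IsNorm ν) :
    ∃ f : E → ℝ, Continuous f ∧ f 0 = 0 ∧ (∀ x, ν x ≤ f x) := by
  classical
  set b := Module.finBasis ℝ E with hb
  refine ⟨fun x => ∑ i, |b.repr x i| * ν (b i), ?_, by simp, ?_⟩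
  · refine continuous_finset_sum _ fun i _ => ?_
    have h1 : Continuous fun x : E => b.repr x i := by
      have : Continuous (b.coord i) := LinearMap.continuous_of_finiteDimensional _
      convert this using 1; ext x; simp [Module.Basis.coord_apply]
    exact (h1.abs).mul continuous_const
  · intro x
    conv_lhs => rw [← b.sum_repr x]
    refine le_trans (hν.sum_le' _ _) ?_
    refine Finset.sum_le_sum fun i _ => ?_
    rw [hν.2.2.1]

lemma IsNorm.continuous' {ν : E → ℝ} (hν : IsNorm ν) : Continuous ν := by
  obtain ⟨f, hf, hf0, hle⟩ := hν.le_aux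
  rw [continuous_iff_continuousAt]
  intro x₀
  have key : ∀ g : E → E, Continuous g → g x₀ = 0 →
      Tendsto (fun x => f (g x)) (nhds x₀) (nhds 0) := by
    intro g hg hg0
    have := (hf.comp hg).tendsto x₀
    simpa [hg0, hf0, Function.comp_def] using this
  have h1 : Tendsto (fun x => ν x₀ - f (x₀ - x)) (nhds x₀) (nhds (ν x₀)) := by
    simpa using tendsto_const_nhds.sub (key (fun x => x₀ - x)
      (continuous_const.sub continuous_id) (by simp))
  have h2 : Tendsto (fun x => ν x₀ + f (x - x₀)) (nhds x₀) (nhds (ν x₀)) := by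
    simpa using tendsto_const_nhds.add (key (fun x => x - x₀)
      (continuous_id.sub continuous_const) (by simp))
  refine tendsto_of_tendsto_of_tendsto_of_le_of_le h1 h2 ?_ ?_
  · intro x
    have : ν x₀ ≤ ν x + ν (x₀ - x) := by
      have := hν.2.2.2 x (x₀ - x)
      simpa using this
    have h3 := hle (x₀ - x)
    simp only []
    linarith
  · intro x
    have : ν x₀ ≥ ν x - ν (x - x₀) := by
      have := hν.2.2.2 x₀ (x - x₀)
      simp at this
      linarith
    have h3 := hle (x - x₀)
    simp only []
    linarith

lemma IsNorm.exists_pos_lower {ν : E → ℝ} (hν : IsNorm ν) :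
    ∃ c > 0, ∀ x, c * ‖x‖ ≤ ν x := by
  by_cases hE : Subsingleton E
  · exact ⟨1, one_pos, fun x => by rw [Subsingleton.elim x 0]; simp [hν.zero']⟩
  · have : Nontrivial E := not_subsingleton_iff_nontrivial.mp hE
    have hcpt : IsCompact (Metric.sphere (0:E) 1) := isCompact_sphere _ _
    have hne : (Metric.sphere (0:E) 1).Nonempty := NormedSpace.sphere_nonempty.mpr (by norm_num)
    obtain ⟨x₀, hx₀, hmin⟩ := hcpt.exists_isMinOn hne hν.continuous'.continuousOn
    have hx₀n : ‖x₀‖ = 1 := by simpa using hx₀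
    have hx₀0 : x₀ ≠ 0 := by intro h; rw [h] at hx₀n; simp at hx₀n
    have hc : 0 < ν x₀ := lt_of_le_of_ne (hν.1 x₀) fun h => hx₀0 (hν.2.1 x₀ h.symm)
    refine ⟨ν x₀, hc, fun x => ?_⟩
    rcases eq_or_ne x 0 with rfl | hx
    · simp [hν.zero']
    · have hxn : (0:ℝ) < ‖x‖ := norm_pos_iff.mpr hx
      have hmem : ‖x‖⁻¹ • x ∈ Metric.sphere (0:E) 1 := by
        simp [norm_smul, abs_of_pos (inv_pos.mpr hxn), inv_mul_cancel₀ hxn.ne']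
      have h1 := isMinOn_iff.mp hmin _ hmem
      rw [hν.2.2.1, abs_inv, abs_of_pos hxn] at h1
      have h2 := mul_le_mul_of_nonneg_left h1 hxn.le
      rw [← mul_assoc, mul_inv_cancel₀ hxn.ne', one_mul] at h2
      linarith

lemma opNorm_set_bddAbove {νE : E → ℝ} {νF : F → ℝ}
    (hE : IsNorm νE) (hFc : Continuous νF) (L : E →ₗ[ℝ] F) :
    BddAbove {c | ∃ x, νE x = 1 ∧ c = νF (L x)} := by
  obtain ⟨c, hc, hlow⟩ := hE.exists_pos_lower
  have hset : {c | ∃ x, νE x = 1 ∧ c = νF (L x)} = (fun x => νF (L x)) '' {x | νE x = 1} := by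
    ext d
    constructor
    · rintro ⟨x, hx, rfl⟩; exact ⟨x, hx, rfl⟩
    · rintro ⟨x, hx, rfl⟩; exact ⟨x, hx, rfl⟩
  rw [hset]
  have hclosed : IsClosed {x : E | νE x = 1} := isClosed_eq hE.continuous' continuous_const
  have hsub : {x : E | νE x = 1} ⊆ Metric.closedBall 0 c⁻¹ := by
    intro x hx
    simp only [Metric.mem_closedBall, dist_zero_right]
    have h2 : c * ‖x‖ ≤ 1 := by rw [Set.mem_setOf_eq] at hx; rw [← hx]; exact hlow x
    calc ‖x‖ = c⁻¹ * (c * ‖x‖) := by field_simp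
      _ ≤ c⁻¹ * 1 := mul_le_mul_of_nonneg_left h2 (inv_pos.mpr hc).le
      _ = c⁻¹ := mul_one _
  have hcpt : IsCompact {x : E | νE x = 1} :=
    (isCompact_closedBall (0:E) c⁻¹).of_isClosed_subset hclosed hsub
  exact (hcpt.image (hFc.comp (LinearMap.continuous_of_finiteDimensional L))).bddAbove

end Norm

section OpN

variable {E F : Type*} [AddCommGroup E] [Module ℝ E] [AddCommGroup F] [Module ℝ F]

lemma apply_le_opNorm {νE : E → ℝ} {νF : F → ℝ} (hE : IsNorm νE) (hF : IsNorm νF)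
    (L : E →ₗ[ℝ] F) (hbdd : BddAbove {c | ∃ x, νE x = 1 ∧ c = νF (L x)}) (x : E) :
    νF (L x) ≤ opNorm νE νF (⇑L) * νE x := by
  rcases eq_or_ne (νE x) 0 with h0 | h0
  · have hx : x = 0 := hE.2.1 x h0
    rw [hx, map_zero, hF.zero', hE.zero', mul_zero]
  · have ht : 0 < νE x := lt_of_le_of_ne (hE.1 x) (Ne.symm h0)
    set y := (νE x)⁻¹ • x with hy
    have hy1 : νE y = 1 := by
      rw [hy, hE.2.2.1, abs_inv, abs_of_pos ht, inv_mul_cancel₀ ht.ne']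
    have hmem : νF (L y) ∈ {c | ∃ x, νE x = 1 ∧ c = νF (L x)} := ⟨y, hy1, rfl⟩
    have hle : νF (L y) ≤ opNorm νE νF (⇑L) := le_csSup hbdd hmem
    have hxy : x = (νE x) • y := by rw [hy, smul_inv_smul₀ ht.ne']
    calc νF (L x) = νF (L ((νE x) • y)) := by rw [← hxy]
      _ = |νE x| * νF (L y) := by rw [map_smul, hF.2.2.1]
      _ = νE x * νF (L y) := by rw [abs_of_pos ht]
      _ ≤ νE x * opNorm νE νF (⇑L) := mul_le_mul_of_nonneg_left hle ht.le
      _ = opNorm νE νF (⇑L) * νE x := mul_comm _ _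

lemma opNorm_le_of_forall {νE : E → ℝ} {νF : F → ℝ} (L : E → F) {K : ℝ}
    (hne : ∃ x, νE x = 1) (hK : ∀ x, νE x = 1 → νF (L x) ≤ K) :
    opNorm νE νF L ≤ K := by
  obtain ⟨x₀, hx₀⟩ := hne
  refine csSup_le ⟨νF (L x₀), x₀, hx₀, rfl⟩ ?_
  rintro c ⟨x, hx, rfl⟩
  exact hK x hx

end OpN

noncomputable def blockL {N n : ℕ} (A : Fin N → Fin N → Matrix (Fin n) (Fin n) ℝ) :
    (Fin N → Fin n → ℝ) →ₗ[ℝ] (Fin N → Fin n → ℝ) where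
  toFun := blockMulVec A
  map_add' x y := by
    funext i
    simp [blockMulVec, Matrix.mulVec_add, Finset.sum_add_distrib]
  map_smul' c x := by
    funext i
    simp [blockMulVec, Matrix.mulVec_smul, Finset.smul_sum]

/-- Let `|·|_{G_i}` be norms on `ℝ^n`, `|·|_S` a monotone norm on `ℝ^N`, and
`|·|_G` the composite norm `|η|_G = |(|η_1|_{G_1},…,|η_N|_{G_N})|_S` on `ℝ^{nN}`.  For a
block-partitioned `A ∈ ℝ^{nN×nN}`, let `Â` be the `N×N` matrix with `Â_{ii} = μ_{G_i}(A_{ii})`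
and `Â_{ij} = ‖A_{ij}‖_{G_{i,j}}` (operator norm from `(ℝ^n,|·|_{G_j})` to `(ℝ^n,|·|_{G_i})`)
for `i ≠ j`.  Then `μ_G(A) ≤ μ_S(Â)`. -/
theorem measure_composite_le_measure_majorant
    {n N : ℕ}
    (G : Fin N → (Fin n → ℝ) → ℝ) (hG : ∀ i, IsNorm (G i))
    (S : (Fin N → ℝ) → ℝ) (hS : IsNorm S)
    (hSmono : ∀ x y : Fin N → ℝ, (∀ i, 0 ≤ x i) → (∀ i, x i ≤ y i) → S x ≤ S y)
    (A : Fin N → Fin N → Matrix (Fin n) (Fin n) ℝ)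
    (Ahat : Matrix (Fin N) (Fin N) ℝ)
    (μdiag : Fin N → ℝ)
    (hμdiag : ∀ i, HasMatMeasure (G i) (A i i).mulVec (μdiag i))
    (hAhat_diag : ∀ i, Ahat i i = μdiag i)
    (hAhat_off : ∀ i j, i ≠ j → Ahat i j = opNorm (G j) (G i) (A i j).mulVec)
    (μG μS : ℝ)
    (hμG : HasMatMeasure (fun η : Fin N → Fin n → ℝ => S (fun i => G i (η i)))
      (blockMulVec A) μG)
    (hμS : HasMatMeasure S Ahat.mulVec μS) :
    μG ≤ μS := by
  classical
  unfold HasMatMeasure at hμG hμS hμdiag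
  set l := nhdsWithin (0:ℝ) (Set.Ioi 0) with hldef
  set Gc : (Fin N → Fin n → ℝ) → ℝ := fun η => S (fun i => G i (η i)) with hGcdef
  have hGc0 : Gc 0 = 0 := by
    have h0 : (fun i => G i ((0 : Fin N → Fin n → ℝ) i)) = (0 : Fin N → ℝ) := by
      funext i; exact (hG i).zero'
    show S (fun i => G i ((0 : Fin N → Fin n → ℝ) i)) = 0
    rw [h0, hS.zero']
  by_cases hnt : Nontrivial (Fin N → Fin n → ℝ)
  swap
  · -- degenerate case: the composite space is trivial, so hμG is contradictory
    exfalso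
    have hsub : Subsingleton (Fin N → Fin n → ℝ) := not_nontrivial_iff_subsingleton.mp hnt
    have hGcall : ∀ x : Fin N → Fin n → ℝ, Gc x = 0 := fun x => by
      rw [Subsingleton.elim x 0]; exact hGc0
    have hop : ∀ h : ℝ, opNorm Gc Gc (fun x => x + h • blockMulVec A x) = 0 := by
      intro h
      have hempty : {c | ∃ x, Gc x = 1 ∧ c = Gc (x + h • blockMulVec A x)} = ∅ := by
        ext c
        simp only [Set.mem_setOf_eq, Set.mem_empty_iff_false, iff_false]
        rintro ⟨x, hx, -⟩
        rw [hGcall x] at hx; norm_num at hx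
      rw [opNorm, hempty, Real.sSup_empty]
    have heq : (fun h : ℝ => (opNorm Gc Gc (fun x => x + h • blockMulVec A x) - 1)/h)
        = fun h : ℝ => -(1/h) := by
      funext h; rw [hop h]; ring
    rw [heq] at hμG
    have hbot : Tendsto (fun h : ℝ => -(1/h)) l atBot := by
      have h1 : Tendsto (fun h : ℝ => 1/h) l atTop := by
        simpa [one_div] using tendsto_inv_nhdsGT_zero
      exact tendsto_neg_atTop_atBot.comp h1
    have e1 : ∀ᶠ h in l, -(1/h) ≤ μG - 1 := hbot.eventually (eventually_le_atBot _)
    have e2 : ∀ᶠ h in l, μG - 1 < -(1/h) :=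
      hμG.eventually (eventually_gt_nhds (by linarith))
    obtain ⟨h, hh1, hh2⟩ := (e1.and e2).exists
    linarith
  · -- main case
    obtain ⟨η₀, hη₀⟩ := exists_ne (0 : Fin N → Fin n → ℝ)
    have hij : ∃ i j, η₀ i j ≠ 0 := by
      by_contra hcon; push_neg at hcon
      exact hη₀ (funext fun i => funext fun j => hcon i j)
    obtain ⟨i₀, j₀, hij0⟩ := hij
    haveI : Nontrivial (Fin N → ℝ) :=
      ⟨⟨fun _ => 1, 0, fun h => by simpa using congrFun h i₀⟩⟩
    haveI : Nontrivial (Fin n → ℝ) :=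
      ⟨⟨fun _ => 1, 0, fun h => by simpa using congrFun h j₀⟩⟩
    have hGc : IsNorm Gc := by
      refine ⟨fun η => hS.1 _, ?_, ?_, ?_⟩
      · intro η hη
        have h0 := hS.2.1 _ hη
        funext i
        have := congrFun h0 i
        exact (hG i).2.1 _ this
      · intro a η
        show S (fun i => G i ((a • η) i)) = |a| * S (fun i => G i (η i))
        have h1 : (fun i => G i ((a • η) i)) = |a| • (fun i => G i (η i)) := by
          funext i
          simp only [Pi.smul_apply, smul_eq_mul]
          exact (hG i).2.2.1 a (η i)
        rw [h1, hS.2.2.1, abs_abs]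
      · intro η ζ
        show S (fun i => G i ((η + ζ) i)) ≤ _
        calc S (fun i => G i ((η + ζ) i))
            ≤ S ((fun i => G i (η i)) + fun i => G i (ζ i)) := by
              refine hSmono _ _ (fun i => (hG i).1 _) fun i => ?_
              simpa using (hG i).2.2.2 (η i) (ζ i)
          _ ≤ _ := hS.2.2.2 _ _
    refine le_of_forall_pos_le_add fun ε hε => ?_
    have hev : ∀ᶠ h in l, ∀ i,
        opNorm (G i) (G i) (fun x => x + h • (A i i).mulVec x) < 1 + h * (μdiag i + ε) := by
      rw [eventually_all]
      intro i
      have h1 : ∀ᶠ h in l,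
          (opNorm (G i) (G i) (fun x => x + h • (A i i).mulVec x) - 1)/h < μdiag i + ε :=
        (hμdiag i).eventually (eventually_lt_nhds (by linarith))
      filter_upwards [h1, self_mem_nhdsWithin] with h hq hhpos
      rw [Set.mem_Ioi] at hhpos
      rw [div_lt_iff₀ hhpos] at hq
      linarith
    have key : ∀ᶠ h in l,
        (opNorm Gc Gc (fun x => x + h • blockMulVec A x) - 1)/h ≤
        (opNorm S S (fun x => x + h • Ahat.mulVec x) - 1)/h + ε := by
      filter_upwards [hev, self_mem_nhdsWithin] with h hP hh
      rw [Set.mem_Ioi] at hh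
      set LS : (Fin N → ℝ) →ₗ[ℝ] (Fin N → ℝ) := LinearMap.id + h • Ahat.mulVecLin with hLSdef
      have hLS : ⇑LS = fun x => x + h • Ahat.mulVec x := by
        funext x; simp [hLSdef, Matrix.mulVecLin_apply]
      have main : opNorm Gc Gc (fun x => x + h • blockMulVec A x) ≤
          opNorm S S (fun x => x + h • Ahat.mulVec x) + h * ε := by
        obtain ⟨η₁, hη₁⟩ := hGc.exists_one
        refine csSup_le ⟨_, η₁, hη₁, rfl⟩ ?_
        rintro c ⟨η, hη1, rfl⟩
        set v : Fin N → ℝ := fun i => G i (η i) with hv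
        have hv0 : ∀ i, 0 ≤ v i := fun i => (hG i).1 _
        have hSv : S v = 1 := hη1
        have step1 : ∀ i, G i ((η + h • blockMulVec A η) i) ≤
            v i + h * Ahat.mulVec v i + h * ε * v i := by
          intro i
          have exp : (η + h • blockMulVec A η) i =
              (η i + h • (A i i).mulVec (η i)) +
                ∑ j ∈ Finset.univ.erase i, h • (A i j).mulVec (η j) := by
            have hbm : blockMulVec A η i = (A i i).mulVec (η i) +
                ∑ j ∈ Finset.univ.erase i, (A i j).mulVec (η j) :=
              (Finset.add_sum_erase _ _ (Finset.mem_univ i)).symm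
            simp only [Pi.add_apply, Pi.smul_apply, hbm, smul_add, Finset.smul_sum]
            abel
          rw [exp]
          have t1 : G i ((η i + h • (A i i).mulVec (η i)) +
              ∑ j ∈ Finset.univ.erase i, h • (A i j).mulVec (η j)) ≤
              G i (η i + h • (A i i).mulVec (η i)) +
              ∑ j ∈ Finset.univ.erase i, G i (h • (A i j).mulVec (η j)) :=
            le_trans ((hG i).2.2.2 _ _) (by
              have := (hG i).sum_le' (Finset.univ.erase i)
                (fun j => h • (A i j).mulVec (η j))
              linarith)
          have d1 : G i (η i + h • (A i i).mulVec (η i)) ≤ (1 + h * (μdiag i + ε)) * v i := by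
            set Ld : (Fin n → ℝ) →ₗ[ℝ] (Fin n → ℝ) :=
              LinearMap.id + h • (A i i).mulVecLin with hLddef
            have hLd : ⇑Ld = fun x => x + h • (A i i).mulVec x := by
              funext x; simp [hLddef, Matrix.mulVecLin_apply]
            have hb := apply_le_opNorm (hG i) (hG i) Ld
              (opNorm_set_bddAbove (hG i) (hG i).continuous' Ld) (η i)
            rw [hLd] at hb
            calc G i (η i + h • (A i i).mulVec (η i)) ≤
                opNorm (G i) (G i) (fun x => x + h • (A i i).mulVec x) * v i := hb
              _ ≤ (1 + h * (μdiag i + ε)) * v i :=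
                  mul_le_mul_of_nonneg_right (hP i).le (hv0 i)
          have o1 : ∀ j ∈ Finset.univ.erase i,
              G i (h • (A i j).mulVec (η j)) ≤ h * (Ahat i j * v j) := by
            intro j hj
            have hji : j ≠ i := Finset.ne_of_mem_erase hj
            rw [(hG i).2.2.1, abs_of_pos hh]
            refine mul_le_mul_of_nonneg_left ?_ hh.le
            rw [hAhat_off i j (Ne.symm hji)]
            have hcoe : ⇑(A i j).mulVecLin = (A i j).mulVec := by
              funext x; simp [Matrix.mulVecLin_apply]
            have hb := apply_le_opNorm (hG j) (hG i) (A i j).mulVecLin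
              (opNorm_set_bddAbove (hG j) (hG i).continuous' _) (η j)
            rw [hcoe] at hb
            exact hb
          have sum_o : ∑ j ∈ Finset.univ.erase i, G i (h • (A i j).mulVec (η j)) ≤
              ∑ j ∈ Finset.univ.erase i, h * (Ahat i j * v j) := Finset.sum_le_sum o1
          have hmv : Ahat.mulVec v i = μdiag i * v i +
              ∑ j ∈ Finset.univ.erase i, Ahat i j * v j := by
            have : Ahat.mulVec v i = ∑ j, Ahat i j * v j := by
              simp [Matrix.mulVec, dotProduct]
            rw [this, ← Finset.add_sum_erase _ _ (Finset.mem_univ i), hAhat_diag i]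
          have hms : ∑ j ∈ Finset.univ.erase i, h * (Ahat i j * v j) =
              h * ∑ j ∈ Finset.univ.erase i, Ahat i j * v j := by
            rw [Finset.mul_sum]
          rw [hmv]
          calc G i ((η i + h • (A i i).mulVec (η i)) +
                ∑ j ∈ Finset.univ.erase i, h • (A i j).mulVec (η j))
              ≤ G i (η i + h • (A i i).mulVec (η i)) +
                ∑ j ∈ Finset.univ.erase i, G i (h • (A i j).mulVec (η j)) := t1
            _ ≤ (1 + h * (μdiag i + ε)) * v i +
                ∑ j ∈ Finset.univ.erase i, h * (Ahat i j * v j) := by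
                exact add_le_add d1 sum_o
            _ = v i + h * (μdiag i * v i + ∑ j ∈ Finset.univ.erase i, Ahat i j * v j) +
                h * ε * v i := by rw [hms]; ring
        have hfinal : Gc (η + h • blockMulVec A η) ≤
            opNorm S S (fun x => x + h • Ahat.mulVec x) + h * ε := by
          have hb2 := apply_le_opNorm hS hS LS
            (opNorm_set_bddAbove hS hS.continuous' LS) v
          rw [hLS] at hb2
          have h3 : S ((h * ε) • v) = (h * ε) * S v := by
            rw [hS.2.2.1, abs_of_pos (by positivity)]
          calc Gc (η + h • blockMulVec A η)
              = S (fun i => G i ((η + h • blockMulVec A η) i)) := rfl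
            _ ≤ S (fun i => v i + h * Ahat.mulVec v i + h * ε * v i) :=
                hSmono _ _ (fun i => (hG i).1 _) step1
            _ = S ((v + h • Ahat.mulVec v) + (h * ε) • v) := by
                have hfe : (fun i => v i + h * Ahat.mulVec v i + h * ε * v i) =
                    ((v + h • Ahat.mulVec v) + (h * ε) • v) := by
                  funext i
                  simp only [Pi.add_apply, Pi.smul_apply, smul_eq_mul]
                  try ring
                rw [hfe]
            _ ≤ S (v + h • Ahat.mulVec v) + S ((h * ε) • v) := hS.2.2.2 _ _
            _ ≤ opNorm S S (fun x => x + h • Ahat.mulVec x) * S v + (h * ε) * S v := by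
                rw [h3]
                exact add_le_add (by simpa using hb2) le_rfl
            _ = opNorm S S (fun x => x + h • Ahat.mulVec x) + h * ε := by
                rw [hSv]; ring
        exact hfinal
      have hdiv : (opNorm S S (fun x => x + h • Ahat.mulVec x) - 1)/h + ε =
          (opNorm S S (fun x => x + h • Ahat.mulVec x) + h * ε - 1)/h := by
        field_simp
        ring
      rw [hdiv]
      exact (div_le_div_iff_of_pos_right hh).mpr (by linarith)
    have hfin : Tendsto (fun h : ℝ =>
        (opNorm S S (fun x => x + h • Ahat.mulVec x) - 1)/h + ε) l (nhds (μS + ε)) :=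
      hμS.add_const ε
    exact le_of_tendsto_of_tendsto hμG hfin key
end

section
/- (Halanay-type inequality.) Let τ_max ≥ 0 be finite and let u : [t₀ − τ_max, +∞) → ℝ_{≥0} be continuous, and suppose D⁺u(t) ≤ a·u(t) + b·sup_{t−τ(t) ≤ s ≤ t} u(s) + c for all t ≥ t₀, where: (i) τ(t) is nonnegative and bounded, 0 ≤ τ(t) ≤ τ_max for all t; (ii) u is bounded on [t₀ − τ_max, t₀]; (iii) a < 0, b ≥ 0, c ≥ 0; and (iv) there exists σ > 0 with a + b ≤ −σ < 0. Then for all t ≥ t₀, u(t) ≤ (sup_{t₀ − τ_max ≤ s ≤ t₀} u(s))·e^{−λ̂(t−t₀)} + c/σ, where λ̂ := inf_{t ≥ t₀} { λ(t) : λ(t) + a + b·e^{λ(t)τ(t)} = 0, λ(t) > 0 } is positive. -/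
open Filter Set Topology

/-- Upper (right) Dini derivative: `D⁺u(t) = limsup_{h→0⁺} (u(t+h) − u(t))/h`. -/
noncomputable def diniDeriv (u : ℝ → ℝ) (t : ℝ) : ℝ :=
  Filter.limsup (fun h : ℝ => (u (t + h) - u t) / h) (nhdsWithin (0 : ℝ) (Set.Ioi 0))

/-- **Halanay-type inequality.**  Let `u : [t₀−τ_max, ∞) → ℝ_{≥0}` be
continuous with `D⁺u(t) ≤ a·u(t) + b·sup_{t−τ(t)≤s≤t} u(s) + c` for `t ≥ t₀`, where
`0 ≤ τ(t) ≤ τ_max`, `u` is bounded on `[t₀−τ_max, t₀]`, `a < 0`, `b ≥ 0`, `c ≥ 0` and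
`a + b ≤ −σ < 0` for some `σ > 0`.  Then `λ̂ := inf_{t≥t₀} λ(t)` is positive, where `λ(t)`
is the positive root of `λ + a + b·e^{λτ(t)} = 0`, and for all `t ≥ t₀`,
`u(t) ≤ (sup_{t₀−τ_max ≤ s ≤ t₀} u(s))·e^{−λ̂(t−t₀)} + c/σ`. -/
theorem halanay_inequality
    (t0 τmax : ℝ) (hτmax : 0 ≤ τmax)
    (u τ : ℝ → ℝ) (a b c σ : ℝ)
    (hu_cont : ContinuousOn u (Ici (t0 - τmax)))
    (hu_nonneg : ∀ t, t0 - τmax ≤ t → 0 ≤ u t)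
    (hτ : ∀ t, 0 ≤ τ t ∧ τ t ≤ τmax)
    (hu_bdd : BddAbove (u '' Icc (t0 - τmax) t0))
    (ha : a < 0) (hb : 0 ≤ b) (hc : 0 ≤ c)
    (hσ : 0 < σ) (hab : a + b ≤ -σ)
    (hDini : ∀ t, t0 ≤ t →
      diniDeriv u t ≤ a * u t + b * sSup (u '' Icc (t - τ t) t) + c)
    (lam : ℝ → ℝ)
    (hlam : ∀ t, t0 ≤ t → 0 < lam t ∧ lam t + a + b * Real.exp (lam t * τ t) = 0)
    (lamHat : ℝ) (hlamHat : lamHat = sInf (lam '' Ici t0)) :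
    0 < lamHat ∧
      ∀ t, t0 ≤ t →
        u t ≤ sSup (u '' Icc (t0 - τmax) t0) * Real.exp (-lamHat * (t - t0)) + c / σ := by
  set M := sSup (u '' Icc (t0 - τmax) t0) with hMdef
  have ht0mem : t0 ∈ Icc (t0 - τmax) t0 := ⟨by linarith, le_refl _⟩
  have hMub : ∀ s, t0 - τmax ≤ s → s ≤ t0 → u s ≤ M := fun s h1 h2 =>
    le_csSup hu_bdd ⟨s, ⟨h1, h2⟩, rfl⟩
  have hM0 : 0 ≤ M := le_trans (hu_nonneg t0 (by linarith)) (hMub t0 (by linarith) le_rfl)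
  -- a positive lower bound lam0 for lam on [t0, ∞)
  have hgcont : Continuous (fun x : ℝ => x + b * (Real.exp (x * τmax) - 1)) := by
    continuity
  obtain ⟨lam0, hlam0pos, hlam0σ⟩ : ∃ x : ℝ, 0 < x ∧ x + b * (Real.exp (x * τmax) - 1) < σ := by
    have h0 : Tendsto (fun x : ℝ => x + b * (Real.exp (x * τmax) - 1)) (𝓝 0) (𝓝 0) := by
      have := hgcont.tendsto 0
      simpa using this
    have hev : ∀ᶠ x in 𝓝 (0:ℝ), x + b * (Real.exp (x * τmax) - 1) < σ :=
      h0.eventually_lt_const hσ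
    have hev' : ∀ᶠ x in 𝓝[>] (0:ℝ),
        x + b * (Real.exp (x * τmax) - 1) < σ := hev.filter_mono nhdsWithin_le_nhds
    obtain ⟨x, hx1, hx2⟩ := (hev'.and self_mem_nhdsWithin).exists
    exact ⟨x, hx2, hx1⟩
  have hlow : ∀ t, t0 ≤ t → lam0 < lam t := by
    intro t ht
    by_contra hcon
    push_neg at hcon
    obtain ⟨hpos, heq⟩ := hlam t ht
    obtain ⟨hτ0, hτm⟩ := hτ t
    have h1 : Real.exp (lam t * τ t) ≤ Real.exp (lam0 * τ t) :=
      Real.exp_le_exp.2 (mul_le_mul_of_nonneg_right hcon hτ0)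
    have h2 : Real.exp (lam0 * τ t) ≤ Real.exp (lam0 * τmax) :=
      Real.exp_le_exp.2 (mul_le_mul_of_nonneg_left hτm hlam0pos.le)
    nlinarith [Real.exp_pos (lam0 * τmax)]
  have hlamne : (lam '' Ici t0).Nonempty := ⟨lam t0, t0, mem_Ici.2 le_rfl, rfl⟩
  have hlambdd : BddBelow (lam '' Ici t0) := by
    refine ⟨lam0, ?_⟩
    rintro y ⟨t, ht, rfl⟩
    exact (hlow t ht).le
  have hlamHatpos : 0 < lamHat := by
    rw [hlamHat]
    refine lt_of_lt_of_le hlam0pos (le_csInf hlamne ?_)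
    rintro y ⟨t, ht, rfl⟩
    exact (hlow t ht).le
  have hlamHat_le : ∀ t, t0 ≤ t → lamHat ≤ lam t := by
    intro t ht
    rw [hlamHat]
    exact csInf_le hlambdd ⟨t, ht, rfl⟩
  have hcσ : 0 ≤ c / σ := div_nonneg hc hσ.le
  -- key estimate with slack ε
  have key : ∀ ε : ℝ, 0 < ε → ∀ t, t0 ≤ t →
      u t ≤ (M + ε) * Real.exp (-lamHat * (t - t0)) + c / σ + ε := by
    intro ε hε
    by_contra hcon
    push_neg at hcon
    obtain ⟨t1, ht1, ht1gt⟩ := hcon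
    set w : ℝ → ℝ := fun t => (M + ε) * Real.exp (-lamHat * (t - t0)) + c / σ + ε with hwdef
    set S : Set ℝ := {t | t0 ≤ t ∧ w t < u t} with hSdef
    have hSne : S.Nonempty := ⟨t1, ht1, ht1gt⟩
    have hSbdd : BddBelow S := ⟨t0, fun t ht => ht.1⟩
    set T := sInf S with hTdef
    have hTt0 : t0 ≤ T := le_csInf hSne fun t ht => ht.1
    have hwc : Continuous w := by
      apply Continuous.add
      apply Continuous.add
      · exact continuous_const.mul ((continuous_const.mul
          (continuous_id.sub continuous_const)).rexp)
      · exact continuous_const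
      · exact continuous_const
    have hinit : ∀ s, t0 - τmax ≤ s → s ≤ t0 → u s < w s := by
      intro s h1 h2
      have hex : (1:ℝ) ≤ Real.exp (-lamHat * (s - t0)) := by
        rw [show (1:ℝ) = Real.exp 0 by simp]
        exact Real.exp_le_exp.2 (by nlinarith)
      have := hMub s h1 h2
      simp only [hwdef]
      nlinarith
    have hbefore : ∀ s, t0 ≤ s → s < T → u s ≤ w s := by
      intro s h1 h2
      by_contra h
      push_neg at h
      exact absurd (csInf_le hSbdd ⟨h1, h⟩) (not_le.2 h2)
    have hleT : ∀ s, t0 - τmax ≤ s → s < T → u s ≤ w s := by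
      intro s h1 h2
      rcases le_or_gt s t0 with h | h
      · exact (hinit s h1 h).le
      · exact hbefore s h.le h2
    have hTmem : T ∈ Ici (t0 - τmax) := by
      simp only [mem_Ici]; linarith
    have huT_le : u T ≤ w T := by
      rcases eq_or_lt_of_le hTt0 with h | h
      · exact (hinit T (by linarith) h.ge).le
      · have hTcl : T ∈ closure (Ico t0 T) := by
          rw [closure_Ico (ne_of_lt h)]
          exact ⟨hTt0, le_rfl⟩
        have hne : (𝓝[Ico t0 T] T).NeBot := mem_closure_iff_nhdsWithin_neBot.1 hTcl
        have hu' : ContinuousWithinAt u (Ico t0 T) T :=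
          (hu_cont.continuousWithinAt hTmem).mono
            (fun x hx => by simp only [mem_Ici]; have := hx.1; linarith)
        have hw' : ContinuousWithinAt w (Ico t0 T) T := hwc.continuousWithinAt
        refine le_of_tendsto_of_tendsto hu' hw' ?_
        filter_upwards [self_mem_nhdsWithin] with s hs
        exact hbefore s hs.1 hs.2
    have hTclS : T ∈ closure S := csInf_mem_closure hSne hSbdd
    have hneS : (𝓝[S] T).NeBot := mem_closure_iff_nhdsWithin_neBot.1 hTclS
    have huT_ge : w T ≤ u T := by
      have hu' : ContinuousWithinAt u S T :=
        (hu_cont.continuousWithinAt hTmem).mono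
          (fun x hx => by simp only [mem_Ici]; have := hx.1; linarith)
      refine le_of_tendsto_of_tendsto hwc.continuousWithinAt hu' ?_
      filter_upwards [self_mem_nhdsWithin] with s hs
      exact hs.2.le
    have huT : u T = w T := le_antisymm huT_le huT_ge
    have hSsub : S ⊆ Ioi T := by
      intro s hs
      rcases lt_or_eq_of_le (csInf_le hSbdd hs) with h | h
      · exact h
      · exfalso
        rw [← h] at hs
        exact absurd hs.2 (by rw [huT]; exact lt_irrefl _)
    -- derivative of w at T
    obtain ⟨L, hLdef⟩ : ∃ L : ℝ, L = -lamHat * ((M + ε) * Real.exp (-lamHat * (T - t0))) :=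
      ⟨_, rfl⟩
    have hderiv : HasDerivAt w L T := by
      have h1 : HasDerivAt (fun t : ℝ => -lamHat * (t - t0)) (-lamHat) T := by
        simpa using ((hasDerivAt_id T).sub_const t0).const_mul (-lamHat)
      have h2 := h1.exp
      have h3 := ((h2.const_mul (M + ε)).add_const (c / σ)).add_const ε
      rw [hLdef]
      exact h3.congr_deriv (by ring)
    have hLneg : L < 0 := by
      rw [hLdef]
      have h0 : 0 < (M + ε) * Real.exp (-lamHat * (T - t0)) :=
        mul_pos (by linarith) (Real.exp_pos _)
      exact mul_neg_of_neg_of_pos (by linarith) h0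
    -- lower bound for the Dini derivative at T
    have hDge : L ≤ diniDeriv u T := by
      rw [diniDeriv, Filter.limsup_eq]
      rcases ({a : ℝ | ∀ᶠ h in 𝓝[>] (0:ℝ), (u (T + h) - u T) / h ≤ a}).eq_empty_or_nonempty
        with hemp | hne
      · rw [hemp, Real.sInf_empty]; linarith
      · refine le_csInf hne ?_
        intro aa haa
        simp only [mem_setOf_eq] at haa
        have hφ : Tendsto (fun s : ℝ => s - T) (𝓝[S] T) (𝓝[>] (0:ℝ)) := by
          apply tendsto_nhdsWithin_of_tendsto_nhds_of_eventually_within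
          · have : Tendsto (fun s : ℝ => s - T) (𝓝 T) (𝓝 (T - T)) :=
              (continuous_id.sub continuous_const).tendsto T
            rw [sub_self] at this
            exact this.mono_left nhdsWithin_le_nhds
          · filter_upwards [self_mem_nhdsWithin] with s hs
            exact sub_pos.2 (mem_Ioi.1 (hSsub hs))
        have h1 : ∀ᶠ s in 𝓝[S] T, (u (T + (s - T)) - u T) / (s - T) ≤ aa := hφ.eventually haa
        have h2 : ∀ᶠ s in 𝓝[S] T, slope w T s ≤ aa := by
          filter_upwards [h1, self_mem_nhdsWithin] with s h1s hsS
          have hsT : T < s := hSsub hsS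
          have hd : 0 < s - T := sub_pos.2 hsT
          have hws : w s ≤ u s := hsS.2.le
          rw [add_sub_cancel] at h1s
          have hww : (w s - w T) / (s - T) ≤ (u s - u T) / (s - T) := by
            gcongr
          calc slope w T s = (w s - w T) / (s - T) := by rw [slope_def_field]
            _ ≤ (u s - u T) / (s - T) := hww
            _ ≤ aa := h1s
        have h3 : Tendsto (slope w T) (𝓝[S] T) (𝓝 L) := by
          have := hasDerivAt_iff_tendsto_slope.1 hderiv
          exact this.mono_left (nhdsWithin_mono T (fun s hs => ne_of_gt (hSsub hs)))
        exact le_of_tendsto h3 h2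
    -- upper bound for the Dini derivative at T from the hypothesis
    obtain ⟨hτT0, hτTm⟩ := hτ T
    have hsup : sSup (u '' Icc (T - τ T) T) ≤
        (M + ε) * Real.exp (-lamHat * (T - τ T - t0)) + c / σ + ε := by
      apply csSup_le
      · exact ⟨u T, T, ⟨by linarith, le_rfl⟩, rfl⟩
      rintro y ⟨s, ⟨hs1, hs2⟩, rfl⟩
      have hs0 : t0 - τmax ≤ s := by linarith
      have husws : u s ≤ w s := by
        rcases lt_or_eq_of_le hs2 with h | h
        · exact hleT s hs0 h
        · rw [h, huT]
      have hwle : w s ≤ (M + ε) * Real.exp (-lamHat * (T - τ T - t0)) + c / σ + ε := by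
        simp only [hwdef]
        have hexp : Real.exp (-lamHat * (s - t0)) ≤ Real.exp (-lamHat * (T - τ T - t0)) :=
          Real.exp_le_exp.2 (mul_le_mul_of_nonpos_left (by linarith) (by linarith))
        have := mul_le_mul_of_nonneg_left hexp (by linarith : (0:ℝ) ≤ M + ε)
        linarith
      exact le_trans husws hwle
    have hmain := hDini T hTt0
    obtain ⟨hlamTpos, hlamTeq⟩ := hlam T hTt0
    have hlamle := hlamHat_le T hTt0
    have hexpF : Real.exp (lamHat * τ T) ≤ Real.exp (lam T * τ T) :=
      Real.exp_le_exp.2 (mul_le_mul_of_nonneg_right hlamle hτT0)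
    have hsplit : Real.exp (-lamHat * (T - τ T - t0)) =
        Real.exp (-lamHat * (T - t0)) * Real.exp (lamHat * τ T) := by
      rw [← Real.exp_add]; ring_nf
    obtain ⟨E, hEdef⟩ : ∃ E : ℝ, E = Real.exp (-lamHat * (T - t0)) := ⟨_, rfl⟩
    obtain ⟨F, hFdef⟩ : ∃ F : ℝ, F = Real.exp (lamHat * τ T) := ⟨_, rfl⟩
    rw [← hEdef, ← hFdef] at hsplit
    rw [← hEdef] at hLdef
    have huTE : u T = (M + ε) * E + c / σ + ε := by
      rw [huT]; simp only [hwdef]; rw [hEdef]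
    have hEpos : 0 < E := hEdef ▸ Real.exp_pos _
    have hFpos : 0 < F := hFdef ▸ Real.exp_pos _
    rw [← hFdef] at hexpF
    have habF : a + b * F ≤ -lamHat := by
      have hbF := mul_le_mul_of_nonneg_left hexpF hb
      linarith
    have hchain : a * u T + b * sSup (u '' Icc (T - τ T) T) + c ≤ L - σ * ε := by
      have h1 : a * u T = a * ((M + ε) * E + c / σ + ε) := by rw [huTE]
      have h2 : b * sSup (u '' Icc (T - τ T) T) ≤ b * ((M + ε) * E * F + c / σ + ε) := by
        apply mul_le_mul_of_nonneg_left _ hb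
        rw [hsplit] at hsup
        linarith [hsup]
      have hcc : σ * (c / σ) = c := by field_simp
      have hME : 0 < M + ε := by linarith
      have hMEE : 0 < (M + ε) * E := mul_pos hME hEpos
      rw [h1]
      have h4 : a * ((M + ε) * E + c / σ + ε) + b * ((M + ε) * E * F + c / σ + ε) + c =
          (M + ε) * E * (a + b * F) + (a + b) * (c / σ + ε) + c := by ring
      have h5 : (M + ε) * E * (a + b * F) ≤ (M + ε) * E * (-lamHat) :=
        mul_le_mul_of_nonneg_left habF hMEE.le
      have h6 : (a + b) * (c / σ + ε) ≤ -σ * (c / σ + ε) := by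
        apply mul_le_mul_of_nonneg_right hab
        linarith
      have h7 : (M + ε) * E * (-lamHat) = L := by rw [hLdef]; ring
      have h8 : -σ * (c / σ + ε) = -c - σ * ε := by
        have hσ' : σ ≠ 0 := ne_of_gt hσ
        field_simp
        ring
      linarith
    have : (0:ℝ) < σ * ε := mul_pos hσ hε
    linarith
  refine ⟨hlamHatpos, fun t ht => ?_⟩
  have hE1 : Real.exp (-lamHat * (t - t0)) ≤ 1 := by
    apply Real.exp_le_one_iff.2  -- name check
    nlinarith
  have hEpos := Real.exp_pos (-lamHat * (t - t0))
  apply le_of_forall_pos_le_add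
  intro ε hε
  have := key (ε / 2) (by positivity) t ht
  nlinarith
end
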